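/- arXiv:2407.17694 — 2 statements merged into one kernel-verified Lean document; each statement's English description precedes it below -/
import Mathlib

section
/- Let 𝓚₀ be a characteristic kernel on ℝ^{d_X+d_Y+d_Z} with Bochner-integrable feature map for both P_{XYZ} and P_{X̃ỸZ}. Then MMDCI(P_{XYZ}) := ‖E[𝓚₀((X,Y,Z),·)] − E[𝓚₀((X̃,Ỹ,Z),·)]‖²_{ℍ₀} equals zero if and only if X and Y are conditionally independent given Z. -/
open MeasureTheory ProbabilityTheory MeasurableSpace Set

section Aux

variable {Ω α β γ : Type*} [MeasurableSpace Ω] [StandardBorelSpace Ω]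
  [MeasurableSpace α] [StandardBorelSpace α] [Nonempty α]
  [MeasurableSpace β] [StandardBorelSpace β] [Nonempty β]
  [MeasurableSpace γ]
  {μ : Measure Ω} [IsProbabilityMeasure μ]

/-- Representation of the joint law as a composition-product with `condDistrib`. -/
lemma aux_map_eq_compProd {W : Ω → α} {Z : Ω → γ} (hW : Measurable W) (hZ : Measurable Z) :
    μ.map (fun ω => (Z ω, W ω)) = (μ.map Z) ⊗ₘ condDistrib W Z μ := by
  haveI : IsProbabilityMeasure (μ.map (fun ω => (Z ω, W ω))) :=
    Measure.isProbabilityMeasure_map (hZ.prodMk hW).aemeasurable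
  exact (compProd_map_condDistrib hW.aemeasurable).symm

/-- Conditional independence given `Z` is equivalent to the conditional distribution of the
pair being (a.e.) the product of the conditional distributions of the marginals. -/
lemma aux_condIndepFun_iff {X : Ω → α} {Y : Ω → β} {Z : Ω → γ}
    (hX : Measurable X) (hY : Measurable Y) (hZ : Measurable Z) :
    CondIndepFun (MeasurableSpace.comap Z inferInstance) hZ.comap_le X Y μ ↔
      ∀ᵐ z ∂(μ.map Z),
        condDistrib (fun ω => (X ω, Y ω)) Z μ z
          = (condDistrib X Z μ ×ₖ condDistrib Y Z μ) z := by
  have hW : Measurable fun ω => (X ω, Y ω) := hX.prodMk hY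
  haveI : IsProbabilityMeasure (μ.map Z) := Measure.isProbabilityMeasure_map hZ.aemeasurable
  constructor
  · intro hci
    have hci' := (condIndepFun_iff_condExp_inter_preimage_eq_mul hX hY).mp hci
    have hmap : μ.map (fun ω => (Z ω, (X ω, Y ω)))
        = (μ.map Z) ⊗ₘ (condDistrib X Z μ ×ₖ condDistrib Y Z μ) := by
      haveI : IsProbabilityMeasure (μ.map (fun ω => (Z ω, (X ω, Y ω)))) :=
        Measure.isProbabilityMeasure_map (hZ.prodMk hW).aemeasurable
      refine MeasureTheory.ext_of_generate_finite
        (image2 (· ×ˢ ·) {s : Set γ | MeasurableSet s}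
          (image2 (· ×ˢ ·) {s : Set α | MeasurableSet s} {t : Set β | MeasurableSet t}))
        ?_ ?_ ?_ ?_
      · exact (generateFrom_eq_prod generateFrom_measurableSet generateFrom_prod
          isCountablySpanning_measurableSet
          (isCountablySpanning_measurableSet.prod isCountablySpanning_measurableSet)).symm
      · exact isPiSystem_measurableSet.prod isPiSystem_prod
      · rintro _ ⟨B, hB, _, ⟨s, hs, t, ht, rfl⟩, rfl⟩
        simp only [Set.mem_setOf_eq] at hB hs ht
        have hset : MeasurableSet (s ×ˢ t) := hs.prod ht
        rw [Measure.map_apply (hZ.prodMk hW) (hB.prod hset),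
          Measure.compProd_apply_prod hB hset,
          show (fun ω => (Z ω, (X ω, Y ω))) ⁻¹' (B ×ˢ s ×ˢ t)
            = Z ⁻¹' B ∩ ((fun ω => (X ω, Y ω)) ⁻¹' (s ×ˢ t)) from rfl,
          ← setLIntegral_preimage_condDistrib hZ hW.aemeasurable hset hB,
          setLIntegral_map hB (Kernel.measurable_coe _ hset) hZ]
        -- a.e. equality of integrands
        have h1 := condDistrib_ae_eq_condExp (μ := μ) hZ hW hset
        have h2 := condDistrib_ae_eq_condExp (μ := μ) hZ hX hs
        have h3 := condDistrib_ae_eq_condExp (μ := μ) hZ hY ht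
        rw [show (fun ω => (X ω, Y ω)) ⁻¹' (s ×ˢ t) = X ⁻¹' s ∩ Y ⁻¹' t from
          Set.mk_preimage_prod X Y] at h1
        have hae : ∀ᵐ ω ∂μ,
            condDistrib (fun ω => (X ω, Y ω)) Z μ (Z ω) (s ×ˢ t)
              = (condDistrib X Z μ ×ₖ condDistrib Y Z μ) (Z ω) (s ×ˢ t) := by
          filter_upwards [h1, h2, h3, hci' s t hs ht] with ω e1 e2 e3 e4
          rw [Kernel.prod_apply, Measure.prod_prod]
          refine (ENNReal.toReal_eq_toReal_iff' (measure_ne_top _ _)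
            (ENNReal.mul_ne_top (measure_ne_top _ _) (measure_ne_top _ _))).mp ?_
          rw [ENNReal.toReal_mul, ← measureReal_def, ← measureReal_def, ← measureReal_def, e1, e2, e3, e4]
        refine lintegral_congr_ae (ae_restrict_of_ae ?_)
        exact hae
      · simp
    have h := condDistrib_ae_eq_of_measure_eq_compProd Z hW.aemeasurable
      (κ := condDistrib X Z μ ×ₖ condDistrib Y Z μ) hmap
    filter_upwards [h] with z hz using hz
  · intro h
    rw [condIndepFun_iff_condExp_inter_preimage_eq_mul hX hY]
    intro s t hs ht
    have h1 := condDistrib_ae_eq_condExp (μ := μ) hZ hW (hs.prod ht)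
    have h2 := condDistrib_ae_eq_condExp (μ := μ) hZ hX hs
    have h3 := condDistrib_ae_eq_condExp (μ := μ) hZ hY ht
    rw [show (fun ω => (X ω, Y ω)) ⁻¹' (s ×ˢ t) = X ⁻¹' s ∩ Y ⁻¹' t from
      Set.mk_preimage_prod X Y] at h1
    have h4 : ∀ᵐ ω ∂μ,
        condDistrib (fun ω => (X ω, Y ω)) Z μ (Z ω)
          = (condDistrib X Z μ ×ₖ condDistrib Y Z μ) (Z ω) :=
      ae_of_ae_map hZ.aemeasurable h
    filter_upwards [h1, h2, h3, h4] with ω e1 e2 e3 e4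
    rw [← e1, ← e2, ← e3, e4, Kernel.prod_apply, measureReal_def, Measure.prod_prod, ENNReal.toReal_mul,
      measureReal_def, measureReal_def]

/-- Transfer of a.e. strong measurability along a map. -/
lemma aux_aesm {Ω E F : Type*} [MeasurableSpace Ω] [MeasurableSpace E]
    [NormedAddCommGroup F] [MeasurableSpace F] [BorelSpace F]
    {μ : Measure Ω} {g : Ω → E} {φ : E → F} (hg : Measurable g) (hφ : Measurable φ)
    (h : AEStronglyMeasurable (fun ω => φ (g ω)) μ) : AEStronglyMeasurable φ (μ.map g) := by
  rw [aestronglyMeasurable_iff_aemeasurable_separable] at h ⊢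
  obtain ⟨-, t, ht, hmem⟩ := h
  refine ⟨hφ.aemeasurable, closure t, ht.closure, ?_⟩
  rw [ae_map_iff hg.aemeasurable (hφ isClosed_closure.measurableSet)]
  exact hmem.mono fun ω hω => subset_closure hω

end Aux

/-- MMDCI(P_{XYZ}) = 0 iff X and Y are conditionally independent given Z, for a
characteristic kernel 𝓚₀ with feature map φ into its RKHS ℍ₀. -/
theorem mmdci_eq_zero_iff_condIndep
    (dX dY dZ : ℕ)
    {Ω : Type} [MeasurableSpace Ω] [StandardBorelSpace Ω]
    (μ : Measure Ω) [IsProbabilityMeasure μ]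
    (X : Ω → EuclideanSpace ℝ (Fin dX)) (Y : Ω → EuclideanSpace ℝ (Fin dY))
    (Z : Ω → EuclideanSpace ℝ (Fin dZ))
    (Xt : Ω → EuclideanSpace ℝ (Fin dX)) (Yt : Ω → EuclideanSpace ℝ (Fin dY))
    (hX : Measurable X) (hY : Measurable Y) (hZ : Measurable Z)
    (hXt : Measurable Xt) (hYt : Measurable Yt)
    -- augmentation properties of (X̃, Ỹ)
    (hpair : CondIndepFun (MeasurableSpace.comap Z inferInstance) hZ.comap_le
      (fun ω => (Xt ω, Yt ω)) (fun ω => (X ω, Y ω)) μ)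
    (htilde : CondIndepFun (MeasurableSpace.comap Z inferInstance) hZ.comap_le Xt Yt μ)
    (hcondX : ∀ᵐ z ∂(μ.map Z), condDistrib Xt Z μ z = condDistrib X Z μ z)
    (hcondY : ∀ᵐ z ∂(μ.map Z), condDistrib Yt Z μ z = condDistrib Y Z μ z)
    -- the RKHS ℍ₀ and the feature map φ of the kernel 𝓚₀
    {H0 : Type} [NormedAddCommGroup H0] [InnerProductSpace ℝ H0] [CompleteSpace H0] [MeasurableSpace H0] [BorelSpace H0]
    (φ : (EuclideanSpace ℝ (Fin dX) × EuclideanSpace ℝ (Fin dY) × EuclideanSpace ℝ (Fin dZ)) → H0)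
    (hφ : Measurable φ)
    -- 𝓚₀ is characteristic: equality of mean embeddings implies equality of measures
    (hchar : ∀ P Q : Measure (EuclideanSpace ℝ (Fin dX) × EuclideanSpace ℝ (Fin dY) ×
        EuclideanSpace ℝ (Fin dZ)), IsProbabilityMeasure P → IsProbabilityMeasure Q →
        Integrable φ P → Integrable φ Q → (∫ w, φ w ∂P = ∫ w, φ w ∂Q) → P = Q)
    -- Bochner integrability of the feature maps
    (hint1 : Integrable (fun ω => φ (X ω, Y ω, Z ω)) μ)
    (hint2 : Integrable (fun ω => φ (Xt ω, Yt ω, Z ω)) μ) :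
    ‖(∫ ω, φ (X ω, Y ω, Z ω) ∂μ) - ∫ ω, φ (Xt ω, Yt ω, Z ω) ∂μ‖ ^ 2 = 0 ↔
      CondIndepFun (MeasurableSpace.comap Z inferInstance) hZ.comap_le X Y μ := by
  have hg : Measurable (fun ω => (X ω, Y ω, Z ω)) := hX.prodMk (hY.prodMk hZ)
  have hgt : Measurable (fun ω => (Xt ω, Yt ω, Z ω)) := hXt.prodMk (hYt.prodMk hZ)
  have hW : Measurable fun ω => (X ω, Y ω) := hX.prodMk hY
  have hWt : Measurable fun ω => (Xt ω, Yt ω) := hXt.prodMk hYt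
  have hφ1 : AEStronglyMeasurable φ (μ.map (fun ω => (X ω, Y ω, Z ω))) :=
    aux_aesm hg hφ hint1.aestronglyMeasurable
  have hφ2 : AEStronglyMeasurable φ (μ.map (fun ω => (Xt ω, Yt ω, Z ω))) :=
    aux_aesm hgt hφ hint2.aestronglyMeasurable
  have hi1 : Integrable φ (μ.map (fun ω => (X ω, Y ω, Z ω))) :=
    (integrable_map_measure hφ1 hg.aemeasurable).mpr hint1
  have hi2 : Integrable φ (μ.map (fun ω => (Xt ω, Yt ω, Z ω))) :=
    (integrable_map_measure hφ2 hgt.aemeasurable).mpr hint2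
  haveI : IsProbabilityMeasure (μ.map (fun ω => (X ω, Y ω, Z ω))) :=
    Measure.isProbabilityMeasure_map hg.aemeasurable
  haveI : IsProbabilityMeasure (μ.map (fun ω => (Xt ω, Yt ω, Z ω))) :=
    Measure.isProbabilityMeasure_map hgt.aemeasurable
  have hl : Measurable (fun p : (EuclideanSpace ℝ (Fin dZ)) ×
      (EuclideanSpace ℝ (Fin dX)) × (EuclideanSpace ℝ (Fin dY)) => (p.2.1, p.2.2, p.1)) := by
    fun_prop
  have hr : Measurable (fun p : (EuclideanSpace ℝ (Fin dX)) ×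
      (EuclideanSpace ℝ (Fin dY)) × (EuclideanSpace ℝ (Fin dZ)) => (p.2.2, (p.1, p.2.1))) := by
    fun_prop
  have hmapg : μ.map (fun ω => (X ω, Y ω, Z ω))
      = (μ.map (fun ω => (Z ω, (X ω, Y ω)))).map
        (fun p => (p.2.1, p.2.2, p.1)) := by
    rw [Measure.map_map hl (hZ.prodMk hW)]; rfl
  have hmapgt : μ.map (fun ω => (Xt ω, Yt ω, Z ω))
      = (μ.map (fun ω => (Z ω, (Xt ω, Yt ω)))).map
        (fun p => (p.2.1, p.2.2, p.1)) := by
    rw [Measure.map_map hl (hZ.prodMk hWt)]; rfl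
  have i1 : ∫ ω, φ (X ω, Y ω, Z ω) ∂μ = ∫ w, φ w ∂(μ.map (fun ω => (X ω, Y ω, Z ω))) :=
    (integral_map hg.aemeasurable hφ1).symm
  have i2 : ∫ ω, φ (Xt ω, Yt ω, Z ω) ∂μ = ∫ w, φ w ∂(μ.map (fun ω => (Xt ω, Yt ω, Z ω))) :=
    (integral_map hgt.aemeasurable hφ2).symm
  rw [pow_eq_zero_iff two_ne_zero, norm_eq_zero, sub_eq_zero, i1, i2]
  constructor
  · intro h
    have hmapeq : μ.map (fun ω => (X ω, Y ω, Z ω)) = μ.map (fun ω => (Xt ω, Yt ω, Z ω)) :=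
      hchar _ _ inferInstance inferInstance hi1 hi2 h
    have e1 : μ.map (fun ω => (Z ω, (X ω, Y ω))) = μ.map (fun ω => (Z ω, (Xt ω, Yt ω))) := by
      have a1 : μ.map (fun ω => (Z ω, (X ω, Y ω)))
          = (μ.map (fun ω => (X ω, Y ω, Z ω))).map (fun p => (p.2.2, (p.1, p.2.1))) := by
        rw [Measure.map_map hr hg]; rfl
      have a2 : μ.map (fun ω => (Z ω, (Xt ω, Yt ω)))
          = (μ.map (fun ω => (Xt ω, Yt ω, Z ω))).map (fun p => (p.2.2, (p.1, p.2.1))) := by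
        rw [Measure.map_map hr hgt]; rfl
      rw [a1, a2, hmapeq]
    have huniq : ∀ᵐ z ∂μ.map Z,
        condDistrib (fun ω => (Xt ω, Yt ω)) Z μ z = condDistrib (fun ω => (X ω, Y ω)) Z μ z :=
      (condDistrib_ae_eq_of_measure_eq_compProd Z hW.aemeasurable
        (e1.trans (aux_map_eq_compProd hWt hZ))).symm
    have hprodt := (aux_condIndepFun_iff hXt hYt hZ).mp htilde
    refine (aux_condIndepFun_iff hX hY hZ).mpr ?_
    filter_upwards [huniq, hprodt, hcondX, hcondY] with z h1 h2 h3 h4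
    rw [← h1, h2, Kernel.prod_apply, Kernel.prod_apply, h3, h4]
  · intro hci
    have hprod := (aux_condIndepFun_iff hX hY hZ).mp hci
    have hprodt := (aux_condIndepFun_iff hXt hYt hZ).mp htilde
    have hk : (condDistrib (fun ω => (X ω, Y ω)) Z μ : _ → _)
        =ᵐ[μ.map Z] (condDistrib (fun ω => (Xt ω, Yt ω)) Z μ : _ → _) := by
      filter_upwards [hprod, hprodt, hcondX, hcondY] with z h1 h2 h3 h4
      rw [h1, h2, Kernel.prod_apply, Kernel.prod_apply, h3, h4]
    have e1 : μ.map (fun ω => (Z ω, (X ω, Y ω))) = μ.map (fun ω => (Z ω, (Xt ω, Yt ω))) := by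
      rw [aux_map_eq_compProd hW hZ, aux_map_eq_compProd hWt hZ]
      exact Measure.compProd_congr hk
    have : μ.map (fun ω => (X ω, Y ω, Z ω)) = μ.map (fun ω => (Xt ω, Yt ω, Z ω)) := by
      rw [hmapg, hmapgt, e1]
    rw [this]
end

section
/- Suppose 𝓚_X ⊗ 𝓚_Z has an RKHS ℍ_X ⊗ ℍ_Z dense in L²(ℝ^{d_X+d_Z}, P_{XZ}) and ℍ_Y is dense in L²(ℝ^{d_Y}, P_Y). If E[f(X)g(Y) | Z] = E[f(X)|Z]·E[g(Y)|Z] almost surely for all f ∈ ℍ_X and g ∈ ℍ_Y, and moreover E[φ(X,Z)ψ(Y)] = E[E[φ(X,Z)|Z]E[ψ(Y)|Z]] for all φ ∈ ℍ_X ⊗ ℍ_Z and ψ ∈ ℍ_Y, then X ⊥ Y | Z. -/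
open MeasureTheory ProbabilityTheory

open scoped ENNReal

section AuxLemmas

variable {α : Type*} {mα : MeasurableSpace α} {μ : Measure α}

/-- Product of two L² functions is integrable. -/
lemma daudin_aux_integrable_mul {u v : α → ℝ} (hu : MemLp u 2 μ) (hv : MemLp v 2 μ) :
    Integrable (fun ω => u ω * v ω) μ := by
  have h := L2.integrable_inner (𝕜 := ℝ) (hu.toLp u) (hv.toLp v)
  refine h.congr ?_
  filter_upwards [hu.coeFn_toLp, hv.coeFn_toLp] with ω h1 h2
  simp [h1, h2, RCLike.inner_apply, mul_comm]

/-- Cauchy–Schwarz inequality in L². -/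
lemma daudin_aux_cauchy_schwarz {u v : α → ℝ} (hu : MemLp u 2 μ) (hv : MemLp v 2 μ) :
    |∫ ω, u ω * v ω ∂μ| ≤ (eLpNorm u 2 μ).toReal * (eLpNorm v 2 μ).toReal := by
  have h1 : ∫ ω, u ω * v ω ∂μ = (inner ℝ (hu.toLp u) (hv.toLp v) : ℝ) := by
    rw [L2.inner_def]
    refine integral_congr_ae ?_
    filter_upwards [hu.coeFn_toLp, hv.coeFn_toLp] with ω h1 h2
    simp [h1, h2, RCLike.inner_apply, mul_comm]
  rw [h1]
  calc |(inner ℝ (hu.toLp u) (hv.toLp v) : ℝ)| ≤ ‖hu.toLp u‖ * ‖hv.toLp v‖ :=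
        abs_real_inner_le_norm _ _
    _ = (eLpNorm u 2 μ).toReal * (eLpNorm v 2 μ).toReal := by
        rw [Lp.norm_toLp, Lp.norm_toLp]

/-- Conditional expectation is an L² contraction (and maps L² to L²). -/
lemma daudin_aux_condexp_L2 {m : MeasurableSpace α} (hm : m ≤ mα) [IsFiniteMeasure μ]
    {u : α → ℝ} (hu : MemLp u 2 μ) :
    MemLp (μ[u|m]) 2 μ ∧ eLpNorm (μ[u|m]) 2 μ ≤ eLpNorm u 2 μ := by
  haveI : IsFiniteMeasure (μ.trim hm) := isFiniteMeasure_trim hm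
  have hae : ⇑(condExpL2 ℝ ℝ hm (hu.toLp u) : α →₂[μ] ℝ) =ᵐ[μ] μ[u|m] := by
    refine ae_eq_condExp_of_forall_setIntegral_eq hm (hu.integrable one_le_two)
      (fun s hs hμs => (integrableOn_condExpL2_of_measure_ne_top hm hμs.ne _))
      (fun s hs hμs => ?_) (aestronglyMeasurable_condExpL2 hm _)
    rw [integral_condExpL2_eq_of_fin_meas_real _ hs hμs.ne]
    exact integral_congr_ae (ae_restrict_of_ae (hu.coeFn_toLp))
  have hbound : eLpNorm (μ[u|m]) 2 μ ≤ eLpNorm u 2 μ := by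
    rw [← eLpNorm_congr_ae hae]
    exact (eLpNorm_condExpL2_le hm _).trans (le_of_eq (eLpNorm_congr_ae (hu.coeFn_toLp)))
  exact ⟨⟨(stronglyMeasurable_condExp.mono hm).aestronglyMeasurable,
    lt_of_le_of_lt hbound hu.2⟩, hbound⟩

end AuxLemmas

section Lift

/-- Lifting a lintegral along a measurable map: if the composition is a.e. measurable,
its integral is at most the (lower) integral of the (possibly non-measurable) function
with respect to the pushforward measure. Uses disintegration. -/
lemma daudin_aux_lift_lintegral {Ω : Type} [MeasurableSpace Ω] [StandardBorelSpace Ω]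
    {β : Type*} [MeasurableSpace β] [StandardBorelSpace β]
    (μ : Measure Ω) [IsProbabilityMeasure μ]
    {f : Ω → β} (hf : Measurable f) (G : β → ℝ≥0∞)
    (hGf : AEMeasurable (fun ω => G (f ω)) μ) :
    ∫⁻ ω, G (f ω) ∂μ ≤ ∫⁻ x, G x ∂(μ.map f) := by
  letI := upgradeStandardBorel β
  haveI : Nonempty Ω := by
    rcases isEmpty_or_nonempty Ω with h|h
    · exfalso
      have h1 := measure_univ (μ := μ)
      rw [show (Set.univ : Set Ω) = ∅ from Set.univ_eq_empty_iff.mpr h, measure_empty] at h1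
      exact zero_ne_one h1
    · exact h
  have hmeas : Measurable (fun ω => (f ω, ω)) := hf.prodMk measurable_id
  set ρ : Measure (β × Ω) := μ.map (fun ω => (f ω, ω)) with hρdef
  haveI : IsProbabilityMeasure ρ := Measure.isProbabilityMeasure_map hmeas.aemeasurable
  have hfst : ρ.fst = μ.map f := Measure.fst_map_prodMk measurable_id
  -- measurable version of the composition
  set W := hGf.mk _ with hWdef
  have hWmeas : Measurable W := hGf.measurable_mk
  have hWae : (fun ω => G (f ω)) =ᵐ[μ] W := hGf.ae_eq_mk
  set N := toMeasurable μ {ω | ¬ G (f ω) = W ω} with hNdef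
  have hNm : MeasurableSet N := measurableSet_toMeasurable _ _
  have hNnull : μ N = 0 := by
    rw [hNdef, measure_toMeasurable]
    exact hWae
  have hNsub : {ω | ¬ G (f ω) = W ω} ⊆ N := subset_toMeasurable _ _
  -- the diagonal-type set
  have hfsnd : Measurable fun p : β × Ω => f p.2 := hf.comp measurable_snd
  have hT : MeasurableSet {p : β × Ω | f p.2 = p.1} :=
    hfsnd.stronglyMeasurable.measurableSet_eq_fun measurable_fst.stronglyMeasurable
  have hρT : ρ ({p : β × Ω | f p.2 = p.1}ᶜ) = 0 := by
    rw [hρdef, Measure.map_apply hmeas hT.compl]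
    convert measure_empty (μ := μ)
    ext ω; simp
  have hρN : ρ (Prod.snd ⁻¹' N) = 0 := by
    rw [hρdef, Measure.map_apply hmeas (measurable_snd hNm)]
    exact hNnull
  have hdis : ρ.fst ⊗ₘ ρ.condKernel = ρ := Measure.disintegrate ρ ρ.condKernel
  set κ := ρ.condKernel with hκdef
  have h1 : ∀ᵐ x ∂ρ.fst, κ x ({ω | f ω = x}ᶜ) = 0 := by
    have hc := Measure.compProd_apply (μ := ρ.fst) (κ := κ) hT.compl
    rw [hdis, hρT] at hc
    have h2 := (lintegral_eq_zero_iff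
      (Kernel.measurable_kernel_prodMk_left hT.compl)).mp hc.symm
    filter_upwards [h2] with x hx
    have : Prod.mk x ⁻¹' {p : β × Ω | f p.2 = p.1}ᶜ = {ω | f ω = x}ᶜ := by
      ext ω; simp [eq_comm]
    rw [← this]
    exact hx
  have h2 : ∀ᵐ x ∂ρ.fst, κ x N = 0 := by
    have hsm : MeasurableSet (Prod.snd ⁻¹' N : Set (β × Ω)) := measurable_snd hNm
    have hc := Measure.compProd_apply (μ := ρ.fst) (κ := κ) hsm
    rw [hdis, hρN] at hc
    have h2 := (lintegral_eq_zero_iff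
      (Kernel.measurable_kernel_prodMk_left hsm)).mp hc.symm
    filter_upwards [h2] with x hx
    have : Prod.mk x ⁻¹' (Prod.snd ⁻¹' N : Set (β × Ω)) = N := rfl
    rw [← this]
    exact hx
  calc ∫⁻ ω, G (f ω) ∂μ = ∫⁻ ω, W ω ∂μ := lintegral_congr_ae hWae
    _ = ∫⁻ p, W p.2 ∂ρ := by
        have hWsnd : Measurable fun p : β × Ω => W p.2 := hWmeas.comp measurable_snd
        exact (lintegral_map hWsnd hmeas).symm
    _ = ∫⁻ x, ∫⁻ ω, W ω ∂(κ x) ∂ρ.fst := by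
        have hWsnd : Measurable fun p : β × Ω => W p.2 := hWmeas.comp measurable_snd
        conv_lhs => rw [← hdis]
        exact Measure.lintegral_compProd hWsnd
    _ ≤ ∫⁻ x, G x ∂ρ.fst := by
        refine lintegral_mono_ae ?_
        filter_upwards [h1, h2] with x hx1 hx2
        set S := {ω | f ω = x} ∩ Nᶜ with hSdef
        have hScompl : κ x Sᶜ = 0 := by
          rw [hSdef, Set.compl_inter, compl_compl]
          exact measure_union_null hx1 hx2
        have hSuniv : S =ᵐ[κ x] Set.univ := MeasureTheory.ae_eq_univ.mpr hScompl
        calc ∫⁻ ω, W ω ∂(κ x) = ∫⁻ ω in Set.univ, W ω ∂(κ x) := (setLIntegral_univ _).symm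
          _ = ∫⁻ ω in S, W ω ∂(κ x) := setLIntegral_congr hSuniv.symm
          _ ≤ ∫⁻ ω in S, G x ∂(κ x) := by
              refine setLIntegral_mono measurable_const (fun ω hω => ?_)
              have hfx : f ω = x := hω.1
              have hWω : G (f ω) = W ω := by
                by_contra hne
                exact hω.2 (hNsub hne)
              rw [← hWω, hfx]
          _ = G x * κ x S := setLIntegral_const S (G x)
          _ ≤ G x * 1 := mul_le_mul_right prob_le_one _
          _ = G x := mul_one _
    _ = ∫⁻ x, G x ∂(μ.map f) := by rw [hfst]

/-- eLpNorm version of the lifting inequality. -/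
lemma daudin_aux_lift_eLpNorm {Ω : Type} [MeasurableSpace Ω] [StandardBorelSpace Ω]
    {β : Type*} [MeasurableSpace β] [StandardBorelSpace β]
    (μ : Measure Ω) [IsProbabilityMeasure μ]
    {f : Ω → β} (hf : Measurable f) (ζ : β → ℝ)
    (hζ : AEStronglyMeasurable (fun ω => ζ (f ω)) μ) :
    eLpNorm (fun ω => ζ (f ω)) 2 μ ≤ eLpNorm ζ 2 (μ.map f) := by
  rw [eLpNorm_eq_lintegral_rpow_enorm_toReal (by norm_num) (by norm_num),
    eLpNorm_eq_lintegral_rpow_enorm_toReal (p := 2) (by norm_num) (by norm_num)]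
  refine ENNReal.rpow_le_rpow ?_ (by norm_num)
  have := daudin_aux_lift_lintegral μ hf
    (fun x => ‖ζ x‖ₑ ^ (2 : ℝ≥0∞).toReal)
    ((ENNReal.continuous_rpow_const.measurable).comp_aemeasurable hζ.enorm)
  exact this

end Lift

section Approx

/-- Abstract ε-approximation lemma: if `(Φ, Ψ)` can be approximated in `L²` by pairs
satisfying the factorization identity, then `(Φ, Ψ)` satisfies it too. -/
lemma daudin_aux_approx {Ω : Type*} {mΩ : MeasurableSpace Ω} (μ : Measure Ω)
    [IsProbabilityMeasure μ] {m : MeasurableSpace Ω} (hm : m ≤ mΩ)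
    (Φ Ψ : Ω → ℝ) (hΦ : MemLp Φ 2 μ) (hΨ : MemLp Ψ 2 μ)
    (happrox : ∀ ε : ℝ, 0 < ε → ε ≤ 1 → ∃ Φ' Ψ' : Ω → ℝ, MemLp Φ' 2 μ ∧ MemLp Ψ' 2 μ ∧
      (eLpNorm (Φ - Φ') 2 μ).toReal ≤ ε ∧ (eLpNorm (Ψ - Ψ') 2 μ).toReal ≤ ε ∧
      ∫ ω, Φ' ω * Ψ' ω ∂μ = ∫ ω, (μ[Φ'|m]) ω * (μ[Ψ'|m]) ω ∂μ) :
    ∫ ω, Φ ω * Ψ ω ∂μ = ∫ ω, (μ[Φ|m]) ω * (μ[Ψ|m]) ω ∂μ := by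
  haveI : IsFiniteMeasure (μ.trim hm) := isFiniteMeasure_trim hm
  set a := (eLpNorm Φ 2 μ).toReal with hadef
  set b := (eLpNorm Ψ 2 μ).toReal with hbdef
  have ha0 : 0 ≤ a := ENNReal.toReal_nonneg
  have hb0 : 0 ≤ b := ENNReal.toReal_nonneg
  obtain ⟨hmΦ2, hcΦ⟩ := daudin_aux_condexp_L2 hm hΦ
  obtain ⟨hmΨ2, hcΨ⟩ := daudin_aux_condexp_L2 hm hΨ
  rw [← sub_eq_zero]
  set d := ∫ ω, Φ ω * Ψ ω ∂μ - ∫ ω, (μ[Φ|m]) ω * (μ[Ψ|m]) ω ∂μ with hddef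
  have key : ∀ ε : ℝ, 0 < ε → ε ≤ 1 → |d| ≤ ε * (2*a + 2*b + 2) := by
    intro ε hε hε1
    obtain ⟨Φ', Ψ', hΦ', hΨ', heΦ, heΨ, hfact⟩ := happrox ε hε hε1
    have hΦd : MemLp (Φ - Φ') 2 μ := hΦ.sub hΦ'
    have hΨd : MemLp (Ψ - Ψ') 2 μ := hΨ.sub hΨ'
    obtain ⟨hmΦ'2, hcΦ'⟩ := daudin_aux_condexp_L2 hm hΦ'
    obtain ⟨hmΨ'2, hcΨ'⟩ := daudin_aux_condexp_L2 hm hΨ'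
    obtain ⟨hmΦd2, hcΦd⟩ := daudin_aux_condexp_L2 hm hΦd
    obtain ⟨hmΨd2, hcΨd⟩ := daudin_aux_condexp_L2 hm hΨd
    -- eLpNorm of Φ' is at most a + ε
    have haΦ' : (eLpNorm Φ' 2 μ).toReal ≤ a + ε := by
      have h2 : Φ' = Φ - (Φ - Φ') := by ext ω; simp
      have h1 : eLpNorm Φ' 2 μ ≤ eLpNorm Φ 2 μ + eLpNorm (Φ - Φ') 2 μ := by
        nth_rewrite 1 [h2]
        exact eLpNorm_sub_le hΦ.aestronglyMeasurable hΦd.aestronglyMeasurable one_le_two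
      calc (eLpNorm Φ' 2 μ).toReal
          ≤ (eLpNorm Φ 2 μ + eLpNorm (Φ - Φ') 2 μ).toReal :=
            ENNReal.toReal_mono (ENNReal.add_ne_top.mpr ⟨hΦ.eLpNorm_ne_top, hΦd.eLpNorm_ne_top⟩) h1
        _ = a + (eLpNorm (Φ - Φ') 2 μ).toReal :=
            ENNReal.toReal_add hΦ.eLpNorm_ne_top hΦd.eLpNorm_ne_top
        _ ≤ a + ε := by linarith
    -- integrability of various products
    have i1 : Integrable (fun ω => (Φ - Φ') ω * Ψ ω) μ := daudin_aux_integrable_mul hΦd hΨ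
    have i2 : Integrable (fun ω => Φ' ω * (Ψ - Ψ') ω) μ := daudin_aux_integrable_mul hΦ' hΨd
    have i3 : Integrable (fun ω => Φ ω * Ψ ω) μ := daudin_aux_integrable_mul hΦ hΨ
    have i4 : Integrable (fun ω => Φ' ω * Ψ' ω) μ := daudin_aux_integrable_mul hΦ' hΨ'
    have j3 : Integrable (fun ω => (μ[Φ|m]) ω * (μ[Ψ|m]) ω) μ :=
      daudin_aux_integrable_mul hmΦ2 hmΨ2
    have j4 : Integrable (fun ω => (μ[Φ'|m]) ω * (μ[Ψ'|m]) ω) μ :=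
      daudin_aux_integrable_mul hmΦ'2 hmΨ'2
    have j1 : Integrable (fun ω => (μ[Φ|m] - μ[Φ'|m]) ω * (μ[Ψ|m]) ω) μ :=
      daudin_aux_integrable_mul (hmΦ2.sub hmΦ'2) hmΨ2
    have j2 : Integrable (fun ω => (μ[Φ'|m]) ω * (μ[Ψ|m] - μ[Ψ'|m]) ω) μ :=
      daudin_aux_integrable_mul hmΦ'2 (hmΨ2.sub hmΨ'2)
    -- decompositions
    have hT1 : ∫ ω, Φ ω * Ψ ω ∂μ - ∫ ω, Φ' ω * Ψ' ω ∂μ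
        = ∫ ω, (Φ - Φ') ω * Ψ ω ∂μ + ∫ ω, Φ' ω * (Ψ - Ψ') ω ∂μ := by
      rw [← integral_add i1 i2, ← integral_sub i3 i4]
      refine integral_congr_ae (Filter.Eventually.of_forall fun ω => ?_)
      simp only [Pi.sub_apply]; ring
    have hT2 : ∫ ω, (μ[Φ|m]) ω * (μ[Ψ|m]) ω ∂μ - ∫ ω, (μ[Φ'|m]) ω * (μ[Ψ'|m]) ω ∂μ
        = ∫ ω, (μ[Φ|m] - μ[Φ'|m]) ω * (μ[Ψ|m]) ω ∂μ
          + ∫ ω, (μ[Φ'|m]) ω * (μ[Ψ|m] - μ[Ψ'|m]) ω ∂μ := by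
      rw [← integral_add j1 j2, ← integral_sub j3 j4]
      refine integral_congr_ae (Filter.Eventually.of_forall fun ω => ?_)
      simp only [Pi.sub_apply]; ring
    -- condexp difference bounds
    have hcsubΦ : (eLpNorm (μ[Φ|m] - μ[Φ'|m]) 2 μ).toReal ≤ ε := by
      have h1 : (μ[Φ|m] - μ[Φ'|m] : Ω → ℝ) =ᵐ[μ] μ[Φ - Φ'|m] :=
        (condExp_sub (hΦ.integrable one_le_two) (hΦ'.integrable one_le_two) m).symm
      rw [eLpNorm_congr_ae h1]
      exact le_trans (ENNReal.toReal_mono hΦd.eLpNorm_ne_top hcΦd) heΦ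
    have hcsubΨ : (eLpNorm (μ[Ψ|m] - μ[Ψ'|m]) 2 μ).toReal ≤ ε := by
      have h1 : (μ[Ψ|m] - μ[Ψ'|m] : Ω → ℝ) =ᵐ[μ] μ[Ψ - Ψ'|m] :=
        (condExp_sub (hΨ.integrable one_le_two) (hΨ'.integrable one_le_two) m).symm
      rw [eLpNorm_congr_ae h1]
      exact le_trans (ENNReal.toReal_mono hΨd.eLpNorm_ne_top hcΨd) heΨ
    have hcbΨ : (eLpNorm (μ[Ψ|m]) 2 μ).toReal ≤ b :=
      ENNReal.toReal_mono hΨ.eLpNorm_ne_top hcΨ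
    have hcbΦ' : (eLpNorm (μ[Φ'|m]) 2 μ).toReal ≤ a + ε :=
      le_trans (ENNReal.toReal_mono hΦ'.eLpNorm_ne_top hcΦ') haΦ'
    -- four bounds
    have b1 : |∫ ω, (Φ - Φ') ω * Ψ ω ∂μ| ≤ ε * b := by
      refine (daudin_aux_cauchy_schwarz hΦd hΨ).trans ?_
      exact mul_le_mul_of_nonneg_right heΦ hb0
    have b2 : |∫ ω, Φ' ω * (Ψ - Ψ') ω ∂μ| ≤ (a + ε) * ε := by
      refine (daudin_aux_cauchy_schwarz hΦ' hΨd).trans ?_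
      exact mul_le_mul haΦ' heΨ ENNReal.toReal_nonneg (by linarith)
    have b3 : |∫ ω, (μ[Φ|m] - μ[Φ'|m]) ω * (μ[Ψ|m]) ω ∂μ| ≤ ε * b := by
      refine (daudin_aux_cauchy_schwarz (hmΦ2.sub hmΦ'2) hmΨ2).trans ?_
      exact mul_le_mul hcsubΦ hcbΨ ENNReal.toReal_nonneg hε.le
    have b4 : |∫ ω, (μ[Φ'|m]) ω * (μ[Ψ|m] - μ[Ψ'|m]) ω ∂μ| ≤ (a + ε) * ε := by
      refine (daudin_aux_cauchy_schwarz hmΦ'2 (hmΨ2.sub hmΨ'2)).trans ?_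
      exact mul_le_mul hcbΦ' hcsubΨ ENNReal.toReal_nonneg (by linarith)
    -- combine
    have hd2 : d = (∫ ω, (Φ - Φ') ω * Ψ ω ∂μ + ∫ ω, Φ' ω * (Ψ - Ψ') ω ∂μ)
        - (∫ ω, (μ[Φ|m] - μ[Φ'|m]) ω * (μ[Ψ|m]) ω ∂μ
           + ∫ ω, (μ[Φ'|m]) ω * (μ[Ψ|m] - μ[Ψ'|m]) ω ∂μ) := by
      rw [hddef, ← hT1, ← hT2, hfact]; ring
    rw [hd2]
    have habs : |(∫ ω, (Φ - Φ') ω * Ψ ω ∂μ + ∫ ω, Φ' ω * (Ψ - Ψ') ω ∂μ)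
        - (∫ ω, (μ[Φ|m] - μ[Φ'|m]) ω * (μ[Ψ|m]) ω ∂μ
           + ∫ ω, (μ[Φ'|m]) ω * (μ[Ψ|m] - μ[Ψ'|m]) ω ∂μ)|
        ≤ |∫ ω, (Φ - Φ') ω * Ψ ω ∂μ| + |∫ ω, Φ' ω * (Ψ - Ψ') ω ∂μ|
          + (|∫ ω, (μ[Φ|m] - μ[Φ'|m]) ω * (μ[Ψ|m]) ω ∂μ|
             + |∫ ω, (μ[Φ'|m]) ω * (μ[Ψ|m] - μ[Ψ'|m]) ω ∂μ|) := by
      refine le_trans (abs_sub _ _) ?_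
      exact add_le_add (abs_add_le _ _) (abs_add_le _ _)
    refine habs.trans ?_
    nlinarith [b1, b2, b3, b4, hε.le, hε1]
  -- conclude d = 0
  by_contra hdne
  have hdpos : 0 < |d| := abs_pos.mpr hdne
  have hKpos : 0 < 2*a + 2*b + 2 := by nlinarith
  have hεpos : 0 < min 1 (|d| / (2*(2*a + 2*b + 2))) := lt_min one_pos (by positivity)
  have hle := key _ hεpos (min_le_left _ _)
  have h2 : min 1 (|d| / (2*(2*a + 2*b + 2))) * (2*a + 2*b + 2)
      ≤ (|d| / (2*(2*a + 2*b + 2))) * (2*a + 2*b + 2) :=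
    mul_le_mul_of_nonneg_right (min_le_right _ _) hKpos.le
  have h3 : (|d| / (2*(2*a + 2*b + 2))) * (2*a + 2*b + 2) = |d|/2 := by
    field_simp
  linarith

end Approx

/-- Daudin-type sufficiency: if the RKHS ℍ_X ⊗ ℍ_Z (modeled as a family FXZ of
functions) is dense in L²(P_{XZ}) and ℍ_Y (family FY) is dense in L²(P_Y), and the
conditional-covariance factorization holds over the RKHS test functions, then X ⊥ Y | Z. -/
theorem daudin_characterization
    (dX dY dZ : ℕ)
    {Ω : Type} [MeasurableSpace Ω] [StandardBorelSpace Ω]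
    (μ : Measure Ω) [IsProbabilityMeasure μ]
    (X : Ω → EuclideanSpace ℝ (Fin dX)) (Y : Ω → EuclideanSpace ℝ (Fin dY))
    (Z : Ω → EuclideanSpace ℝ (Fin dZ))
    (hX : Measurable X) (hY : Measurable Y) (hZ : Measurable Z)
    -- the RKHSs, as families of (square-integrable) functions
    (FX : Set (EuclideanSpace ℝ (Fin dX) → ℝ))
    (FY : Set (EuclideanSpace ℝ (Fin dY) → ℝ))
    (FXZ : Set (EuclideanSpace ℝ (Fin dX) × EuclideanSpace ℝ (Fin dZ) → ℝ))
    (hFXmem : ∀ f ∈ FX, MemLp (fun ω => f (X ω)) 2 μ)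
    (hFYmem : ∀ g ∈ FY, MemLp (fun ω => g (Y ω)) 2 μ)
    (hFXZmem : ∀ φ ∈ FXZ, MemLp (fun ω => φ (X ω, Z ω)) 2 μ)
    -- ℍ_X ⊗ ℍ_Z is dense in L²(P_{XZ})
    (hdenseXZ : ∀ g : EuclideanSpace ℝ (Fin dX) × EuclideanSpace ℝ (Fin dZ) → ℝ,
      MemLp g 2 (μ.map (fun ω => (X ω, Z ω))) → ∀ ε : ℝ, 0 < ε →
        ∃ f ∈ FXZ, eLpNorm (g - f) 2 (μ.map (fun ω => (X ω, Z ω))) < ENNReal.ofReal ε)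
    -- ℍ_Y is dense in L²(P_Y)
    (hdenseY : ∀ g : EuclideanSpace ℝ (Fin dY) → ℝ,
      MemLp g 2 (μ.map Y) → ∀ ε : ℝ, 0 < ε →
        ∃ f ∈ FY, eLpNorm (g - f) 2 (μ.map Y) < ENNReal.ofReal ε)
    -- E[f(X) g(Y) | Z] = E[f(X)|Z] ⬝ E[g(Y)|Z] a.s. for all f ∈ ℍ_X, g ∈ ℍ_Y
    (hfact1 : ∀ f ∈ FX, ∀ g ∈ FY,
      μ[(fun ω => f (X ω) * g (Y ω)) | MeasurableSpace.comap Z inferInstance]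
        =ᵐ[μ] fun ω =>
          ((μ[(fun ω' => f (X ω')) | MeasurableSpace.comap Z inferInstance]) ω)
            * ((μ[(fun ω' => g (Y ω')) | MeasurableSpace.comap Z inferInstance]) ω))
    -- E[φ(X,Z) ψ(Y)] = E[E[φ(X,Z)|Z] E[ψ(Y)|Z]] for all φ ∈ ℍ_X ⊗ ℍ_Z, ψ ∈ ℍ_Y
    (hfact2 : ∀ φ ∈ FXZ, ∀ ψ ∈ FY,
      ∫ ω, φ (X ω, Z ω) * ψ (Y ω) ∂μ =
        ∫ ω, ((μ[(fun ω' => φ (X ω', Z ω')) | MeasurableSpace.comap Z inferInstance]) ω)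
          * ((μ[(fun ω' => ψ (Y ω')) | MeasurableSpace.comap Z inferInstance]) ω) ∂μ) :
    CondIndepFun (MeasurableSpace.comap Z inferInstance) hZ.comap_le X Y μ := by
  classical
  have hXZ : Measurable fun ω => (X ω, Z ω) := hX.prodMk hZ
  haveI hPXZ : IsProbabilityMeasure (μ.map (fun ω => (X ω, Z ω))) :=
    Measure.isProbabilityMeasure_map hXZ.aemeasurable
  haveI hPY : IsProbabilityMeasure (μ.map Y) := Measure.isProbabilityMeasure_map hY.aemeasurable
  have hm : MeasurableSpace.comap Z inferInstance ≤ (inferInstance : MeasurableSpace Ω) :=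
    hZ.comap_le
  haveI : IsFiniteMeasure (μ.trim hm) := isFiniteMeasure_trim hm
  -- Extension of the factorization identity to all of L²
  have EXT : ∀ (φ : EuclideanSpace ℝ (Fin dX) × EuclideanSpace ℝ (Fin dZ) → ℝ)
      (ψ : EuclideanSpace ℝ (Fin dY) → ℝ),
      MemLp φ 2 (μ.map (fun ω => (X ω, Z ω))) → MemLp ψ 2 (μ.map Y) →
      ∫ ω, φ (X ω, Z ω) * ψ (Y ω) ∂μ =
        ∫ ω, ((μ[(fun ω' => φ (X ω', Z ω')) | MeasurableSpace.comap Z inferInstance]) ω)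
          * ((μ[(fun ω' => ψ (Y ω')) | MeasurableSpace.comap Z inferInstance]) ω) ∂μ := by
    intro φ ψ hφ hψ
    have hΦ : MemLp (fun ω => φ (X ω, Z ω)) 2 μ :=
      (memLp_map_measure_iff hφ.aestronglyMeasurable hXZ.aemeasurable).mp hφ
    have hΨ : MemLp (fun ω => ψ (Y ω)) 2 μ :=
      (memLp_map_measure_iff hψ.aestronglyMeasurable hY.aemeasurable).mp hψ
    refine daudin_aux_approx μ hm _ _ hΦ hΨ ?_
    intro ε hε hε1
    obtain ⟨φ', hφ'F, hφ'c⟩ := hdenseXZ φ hφ ε hε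
    obtain ⟨ψ', hψ'F, hψ'c⟩ := hdenseY ψ hψ ε hε
    have hΦ' : MemLp (fun ω => φ' (X ω, Z ω)) 2 μ := hFXZmem φ' hφ'F
    have hΨ' : MemLp (fun ω => ψ' (Y ω)) 2 μ := hFYmem ψ' hψ'F
    refine ⟨fun ω => φ' (X ω, Z ω), fun ω => ψ' (Y ω), hΦ', hΨ', ?_, ?_, ?_⟩
    · -- lift the closeness through the map
      have hsubm : AEStronglyMeasurable (fun ω => (φ - φ') (X ω, Z ω)) μ :=
        (hΦ.sub hΦ').aestronglyMeasurable
      have hlift := daudin_aux_lift_eLpNorm μ hXZ (φ - φ') hsubm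
      have h2 : eLpNorm ((fun ω => φ (X ω, Z ω)) - fun ω => φ' (X ω, Z ω)) 2 μ
          ≤ ENNReal.ofReal ε := le_trans hlift (le_of_lt hφ'c)
      have h3 := ENNReal.toReal_mono ENNReal.ofReal_ne_top h2
      rwa [ENNReal.toReal_ofReal hε.le] at h3
    · have hsubm : AEStronglyMeasurable (fun ω => (ψ - ψ') (Y ω)) μ :=
        (hΨ.sub hΨ').aestronglyMeasurable
      have hlift := daudin_aux_lift_eLpNorm μ hY (ψ - ψ') hsubm
      have h2 : eLpNorm ((fun ω => ψ (Y ω)) - fun ω => ψ' (Y ω)) 2 μ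
          ≤ ENNReal.ofReal ε := le_trans hlift (le_of_lt hψ'c)
      have h3 := ENNReal.toReal_mono ENNReal.ofReal_ne_top h2
      rwa [ENNReal.toReal_ofReal hε.le] at h3
    · exact hfact2 φ' hφ'F ψ' hψ'F
  -- Now prove conditional independence via indicators
  rw [condIndepFun_iff_condExp_inter_preimage_eq_mul hX hY]
  intro s t hs ht
  have hsX : MeasurableSet (X ⁻¹' s) := hX hs
  have htY : MeasurableSet (Y ⁻¹' t) := hY ht
  have hInt : MeasurableSet (X ⁻¹' s ∩ Y ⁻¹' t) := hsX.inter htY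
  -- MemLp of condexps of indicators
  have hmemX : MemLp ((X ⁻¹' s).indicator fun _ => (1:ℝ)) 2 μ :=
    memLp_indicator_const 2 hsX 1 (Or.inr (measure_ne_top _ _))
  have hmemY : MemLp ((Y ⁻¹' t).indicator fun _ => (1:ℝ)) 2 μ :=
    memLp_indicator_const 2 htY 1 (Or.inr (measure_ne_top _ _))
  obtain ⟨hcX2, -⟩ := daudin_aux_condexp_L2 hm hmemX
  obtain ⟨hcY2, -⟩ := daudin_aux_condexp_L2 hm hmemY
  have hgInt : Integrable (fun ω =>
      (μ[(X ⁻¹' s).indicator (fun _ => (1:ℝ))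
          | MeasurableSpace.comap Z inferInstance]) ω
        * (μ[(Y ⁻¹' t).indicator (fun _ => (1:ℝ))
          | MeasurableSpace.comap Z inferInstance]) ω) μ :=
    daudin_aux_integrable_mul hcX2 hcY2
  have hfInd : Integrable ((X ⁻¹' s ∩ Y ⁻¹' t).indicator fun _ => (1:ℝ)) μ :=
    (memLp_indicator_const 1 hInt 1 (Or.inr (measure_ne_top _ _))).integrable le_rfl
  refine (ae_eq_condExp_of_forall_setIntegral_eq hm hfInd
    (fun c _ _ => hgInt.integrableOn) ?_ ?_).symm
  · -- set integral equality
    rintro c ⟨D, hD, rfl⟩ -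
    have hZD : MeasurableSet (Z ⁻¹' D) := hZ hD
    -- apply EXT to indicator test functions
    have hφ0 : MemLp ((s ×ˢ D).indicator fun _ => (1:ℝ)) 2 (μ.map (fun ω => (X ω, Z ω))) :=
      memLp_indicator_const 2 (hs.prod hD) 1 (Or.inr (measure_ne_top _ _))
    have hψ0 : MemLp (t.indicator fun _ => (1:ℝ)) 2 (μ.map Y) :=
      memLp_indicator_const 2 ht 1 (Or.inr (measure_ne_top _ _))
    have hEXT := EXT _ _ hφ0 hψ0
    -- identify the composed test functions
    have e1 : (fun ω' => ((s ×ˢ D).indicator fun _ => (1:ℝ)) (X ω', Z ω'))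
        = (X ⁻¹' s ∩ Z ⁻¹' D).indicator fun _ => (1:ℝ) := by
      funext ω
      by_cases h1 : X ω ∈ s <;> by_cases h2 : Z ω ∈ D <;>
        simp [Set.indicator_apply, Set.mem_prod, h1, h2]
    have e2 : (fun ω' => (t.indicator fun _ => (1:ℝ)) (Y ω'))
        = (Y ⁻¹' t).indicator fun _ => (1:ℝ) := by
      funext ω
      by_cases h1 : Y ω ∈ t <;> simp [Set.indicator_apply, h1]
    rw [e1, e2] at hEXT
    -- rewrite the LHS of hEXT as a set integral
    have e3 : ∀ ω, ((s ×ˢ D).indicator fun _ => (1:ℝ)) (X ω, Z ω)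
          * (t.indicator fun _ => (1:ℝ)) (Y ω)
        = (Z ⁻¹' D).indicator ((X ⁻¹' s ∩ Y ⁻¹' t).indicator fun _ => (1:ℝ)) ω := by
      intro ω
      by_cases h1 : X ω ∈ s <;> by_cases h2 : Z ω ∈ D <;> by_cases h3 : Y ω ∈ t <;>
        simp [Set.indicator_apply, Set.mem_prod, h1, h2, h3]
    have eLHS : ∫ ω, ((s ×ˢ D).indicator fun _ => (1:ℝ)) (X ω, Z ω)
          * (t.indicator fun _ => (1:ℝ)) (Y ω) ∂μ
        = ∫ ω in Z ⁻¹' D, (X ⁻¹' s ∩ Y ⁻¹' t).indicator (fun _ => (1:ℝ)) ω ∂μ := by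
      rw [← integral_indicator hZD]
      exact integral_congr_ae (Filter.Eventually.of_forall e3)
    -- pull the Z-measurable indicator out of the conditional expectation
    have hprod : (X ⁻¹' s ∩ Z ⁻¹' D).indicator (fun _ => (1:ℝ))
        = ((Z ⁻¹' D).indicator fun _ => (1:ℝ)) * ((X ⁻¹' s).indicator fun _ => (1:ℝ)) := by
      funext ω
      by_cases h1 : X ω ∈ s <;> by_cases h2 : Z ω ∈ D <;>
        simp [Set.indicator_apply, h1, h2]
    have hsmD : StronglyMeasurable[MeasurableSpace.comap Z inferInstance]
        ((Z ⁻¹' D).indicator fun _ => (1:ℝ)) :=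
      stronglyMeasurable_const.indicator ⟨D, hD, rfl⟩
    have hIntprod : Integrable
        ((((Z ⁻¹' D).indicator fun _ => (1:ℝ)) * ((X ⁻¹' s).indicator fun _ => (1:ℝ)))) μ := by
      rw [← hprod]
      exact (memLp_indicator_const 1 (hsX.inter hZD) 1
        (Or.inr (measure_ne_top _ _))).integrable le_rfl
    have e4 : μ[(X ⁻¹' s ∩ Z ⁻¹' D).indicator (fun _ => (1:ℝ))
          | MeasurableSpace.comap Z inferInstance]
        =ᵐ[μ] ((Z ⁻¹' D).indicator fun _ => (1:ℝ))
          * μ[(X ⁻¹' s).indicator (fun _ => (1:ℝ)) | MeasurableSpace.comap Z inferInstance] := by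
      rw [hprod]
      exact condExp_mul_of_stronglyMeasurable_left hsmD hIntprod (hmemX.integrable one_le_two)
    -- rewrite the RHS of hEXT
    have eRHS : ∫ ω, (μ[(X ⁻¹' s ∩ Z ⁻¹' D).indicator (fun _ => (1:ℝ))
            | MeasurableSpace.comap Z inferInstance]) ω
          * (μ[(Y ⁻¹' t).indicator (fun _ => (1:ℝ))
            | MeasurableSpace.comap Z inferInstance]) ω ∂μ
        = ∫ ω in Z ⁻¹' D,
            (μ[(X ⁻¹' s).indicator (fun _ => (1:ℝ))
              | MeasurableSpace.comap Z inferInstance]) ω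
            * (μ[(Y ⁻¹' t).indicator (fun _ => (1:ℝ))
              | MeasurableSpace.comap Z inferInstance]) ω ∂μ := by
      rw [← integral_indicator hZD]
      have step1 : ∫ ω, (μ[(X ⁻¹' s ∩ Z ⁻¹' D).indicator (fun _ => (1:ℝ))
            | MeasurableSpace.comap Z inferInstance]) ω
          * (μ[(Y ⁻¹' t).indicator (fun _ => (1:ℝ))
            | MeasurableSpace.comap Z inferInstance]) ω ∂μ
          = ∫ ω, (((Z ⁻¹' D).indicator fun _ => (1:ℝ)) ω
              * (μ[(X ⁻¹' s).indicator (fun _ => (1:ℝ))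
                | MeasurableSpace.comap Z inferInstance]) ω)
            * (μ[(Y ⁻¹' t).indicator (fun _ => (1:ℝ))
              | MeasurableSpace.comap Z inferInstance]) ω ∂μ := by
        refine integral_congr_ae ?_
        filter_upwards [e4] with ω hω
        rw [hω]
        rfl
      rw [step1]
      refine integral_congr_ae (Filter.Eventually.of_forall fun ω => ?_)
      by_cases h2 : Z ω ∈ D <;> simp [Set.indicator_apply, h2]
    rw [eLHS, eRHS] at hEXT
    exact hEXT.symm
  · exact (stronglyMeasurable_condExp.mul stronglyMeasurable_condExp).aestronglyMeasurable
end
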